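/- Let n, d ∈ ℕ and let ρ : Matrix (Fin n → Fin d) (Fin n → Fin d) ℂ be positive semidefinite. Then the following are equivalent: (1) ρ is a product operator, i.e. there exists A : Fin n → Matrix (Fin d) (Fin d) ℂ with ρ i j = ∏_{l : Fin n} A l (i l) (j l) for all i, j; (2) ρ is a product of positive semidefinite operators, i.e. there exists such an A with every A l positive semidefinite; (3) ρ admits a product purification, i.e. there exist d' : Fin n → ℕ and C : (l : Fin n) → Matrix (Fin d) (Fin (d' l)) ℂ with ρ i j = ∏_{l : Fin n} (C l * (C l)ᴴ) (i l) (j l) for all i, j. (Equivalently: osr(ρ) = 1 ↔ sep-rank(ρ) = 1 ↔ puri-rank(ρ) = 1.) -/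

import Mathlib

open Matrix
open scoped BigOperators ComplexOrder

lemma psd_smul_real' {m : Type*} [Fintype m] {M : Matrix m m ℂ} (hM : M.PosSemidef)
    {t : ℝ} (ht : 0 ≤ t) : ((t : ℂ) • M).PosSemidef := by
  rw [posSemidef_iff_dotProduct_mulVec] at hM ⊢
  constructor
  · have h1 := hM.1
    unfold Matrix.IsHermitian at h1 ⊢
    rw [conjTranspose_smul, h1]
    congr 1
    simp [Complex.conj_ofReal]
  · intro x
    rw [Matrix.smul_mulVec, dotProduct_smul, smul_eq_mul]
    have hq := hM.2 x
    rw [Complex.nonneg_iff] at hq ⊢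
    constructor
    · simp [Complex.mul_re, ← hq.2]
      exact mul_nonneg ht hq.1
    · simp [Complex.mul_im, ← hq.2]

open scoped MatrixOrder in
lemma psd_factor' {m : Type*} [Fintype m] [DecidableEq m] {M : Matrix m m ℂ}
    (hM : M.PosSemidef) : ∃ B : Matrix m m ℂ, M = Bᴴ * B := by
  obtain ⟨B, hB⟩ := CStarAlgebra.nonneg_iff_eq_star_mul_self.mp hM.nonneg
  exact ⟨B, hB⟩

lemma psd_factor2' {m : Type*} [Fintype m] [DecidableEq m] {M : Matrix m m ℂ}
    (hM : M.PosSemidef) : ∃ B : Matrix m m ℂ, B * Bᴴ = M := by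
  obtain ⟨B, hB⟩ := psd_factor' hM
  exact ⟨Bᴴ, by rw [conjTranspose_conjTranspose, hB]⟩

lemma psd_diag_zero' {m : Type*} [Fintype m] [DecidableEq m] {M : Matrix m m ℂ}
    (hM : M.PosSemidef) (h : ∀ i, M i i = 0) : M = 0 := by
  obtain ⟨B, rfl⟩ := psd_factor' hM
  have hB : B = 0 := by
    ext k i
    have h2 : dotProduct (star (fun x => B x i)) (fun x => B x i) = 0 := by
      simpa [Matrix.mul_apply, Matrix.conjTranspose_apply, dotProduct] using h i
    exact congrFun (dotProduct_star_self_eq_zero.mp h2) k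
  rw [hB]; simp

lemma psd_diag_nonneg' {m : Type*} [Fintype m] [DecidableEq m] {M : Matrix m m ℂ}
    (hM : M.PosSemidef) (i : m) : 0 ≤ M i i := by
  exact hM.diag_nonneg

lemma key_product_psd {n d : ℕ}
    (ρ : Matrix (Fin n → Fin d) (Fin n → Fin d) ℂ) (hρ : ρ.PosSemidef)
    (h : ∃ A : Fin n → Matrix (Fin d) (Fin d) ℂ,
        ∀ i j, ρ i j = ∏ l : Fin n, A l (i l) (j l)) :
    ∃ A : Fin n → Matrix (Fin d) (Fin d) ℂ,
        (∀ l, (A l).PosSemidef) ∧ ∀ i j, ρ i j = ∏ l : Fin n, A l (i l) (j l) := by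
  obtain ⟨A, hA⟩ := h
  rcases Nat.eq_zero_or_pos n with hn | hn
  · subst hn
    exact ⟨A, fun l => l.elim0, hA⟩
  by_cases hzero : ρ = 0
  · refine ⟨fun _ => 0, fun _ => Matrix.PosSemidef.zero, fun i j => ?_⟩
    simp [hzero, Finset.prod_const, zero_pow hn.ne']
  -- main case
  obtain ⟨i₀, hi₀⟩ : ∃ i, ρ i i ≠ 0 := by
    by_contra hc
    push_neg at hc
    exact hzero (psd_diag_zero' hρ hc)
  set c : ℂ := ρ i₀ i₀ with hcdef
  have hnn : 0 ≤ c := psd_diag_nonneg' hρ i₀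
  set r : ℝ := c.re with hrdef
  have hcr : (r : ℂ) = c := by
    rw [Complex.nonneg_iff] at hnn
    apply Complex.ext <;> simp [hrdef, ← hnn.2]
  have hr : 0 < r := by
    rcases (Complex.nonneg_iff.mp hnn).1.lt_or_eq with h | h
    · exact h
    · exfalso
      apply hi₀
      have hr0 : r = 0 := by rw [hrdef, ← h]
      rw [← hcr, hr0]
      simp
  set f : Fin n → ℂ := fun l => A l (i₀ l) (i₀ l) with hfdef
  have hc : ∏ l, f l = c := (hA i₀ i₀).symm
  set cc : Fin n → ℂ := fun l => ∏ m ∈ ({l}ᶜ : Finset (Fin n)), f m with hccdef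
  set M : Fin n → Matrix (Fin d) (Fin d) ℂ :=
    fun l => ρ.submatrix (fun a => Function.update i₀ l a) (fun a => Function.update i₀ l a)
    with hMdef
  have hMpsd : ∀ l, (M l).PosSemidef := fun l => hρ.submatrix _
  have hMentry : ∀ l a b, M l a b = A l a b * cc l := by
    intro l a b
    have : M l a b = ∏ m, A m (Function.update i₀ l a m) (Function.update i₀ l b m) := by
      rw [hMdef]; exact hA _ _
    rw [this, Fintype.prod_eq_mul_prod_compl l]
    congr 1
    · simp
    · refine Finset.prod_congr rfl fun m hm => ?_
      have hml : m ≠ l := by simpa using hm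
      rw [Function.update_of_ne hml, Function.update_of_ne hml]
  have hfc : ∀ l, f l * cc l = c := by
    intro l
    rw [← hc, Fintype.prod_eq_mul_prod_compl l f]
  have hprodcc : ∏ l, cc l = c ^ (n - 1) := by
    have h1 : ∏ l, (f l * cc l) = c ^ n := by
      simp [hfc, Finset.prod_const, Finset.card_univ]
    rw [Finset.prod_mul_distrib, hc] at h1
    apply mul_left_cancel₀ hi₀
    rw [h1, ← pow_succ', Nat.sub_add_cancel hn]
  have hMprod : ∀ i j, ∏ l, M l (i l) (j l) = c ^ (n - 1) * ρ i j := by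
    intro i j
    calc ∏ l, M l (i l) (j l) = ∏ l, (A l (i l) (j l) * cc l) := by
          exact Finset.prod_congr rfl fun l _ => hMentry l (i l) (j l)
      _ = (∏ l, A l (i l) (j l)) * ∏ l, cc l := Finset.prod_mul_distrib
      _ = c ^ (n - 1) * ρ i j := by rw [hA i j, hprodcc]; ring
  set l₀ : Fin n := ⟨0, hn⟩ with hl₀
  set t : ℝ := (r ^ (n - 1))⁻¹ with htdef
  have ht : 0 ≤ t := by positivity
  refine ⟨fun l => (if l = l₀ then (t : ℂ) else 1) • M l, fun l => ?_, fun i j => ?_⟩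
  · by_cases hl : l = l₀
    · simp only [hl, if_pos rfl]
      exact psd_smul_real' (hMpsd l₀) ht
    · simp only [if_neg hl, one_smul]
      exact hMpsd l
  · have : ∏ l, ((if l = l₀ then (t : ℂ) else 1) • M l) (i l) (j l)
        = (∏ l, (if l = l₀ then (t : ℂ) else 1)) * ∏ l, M l (i l) (j l) := by
      rw [← Finset.prod_mul_distrib]
      exact Finset.prod_congr rfl fun l _ => by simp [Matrix.smul_apply, smul_eq_mul]
    rw [this, hMprod i j, Finset.prod_ite_eq' Finset.univ l₀ (fun _ => (t : ℂ))]
    simp only [Finset.mem_univ, if_pos]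
    rw [← hcr, ← mul_assoc]
    have : (t : ℂ) * (r : ℂ) ^ (n - 1) = 1 := by
      rw [htdef]
      push_cast
      rw [inv_mul_cancel₀]
      exact_mod_cast pow_ne_zero _ hr.ne'
    rw [this, one_mul]

/-- Characterisation of product psd matrices: a psd matrix is a product operator iff it is a
product of psd operators iff it admits a product purification. -/
theorem product_psd_characterisation {n d : ℕ}
    (ρ : Matrix (Fin n → Fin d) (Fin n → Fin d) ℂ) (hρ : ρ.PosSemidef) :
    ((∃ A : Fin n → Matrix (Fin d) (Fin d) ℂ,
        ∀ i j, ρ i j = ∏ l : Fin n, A l (i l) (j l)) ↔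
      (∃ A : Fin n → Matrix (Fin d) (Fin d) ℂ,
        (∀ l, (A l).PosSemidef) ∧ ∀ i j, ρ i j = ∏ l : Fin n, A l (i l) (j l)))
    ∧
    ((∃ A : Fin n → Matrix (Fin d) (Fin d) ℂ,
        ∀ i j, ρ i j = ∏ l : Fin n, A l (i l) (j l)) ↔
      (∃ (d' : Fin n → ℕ) (C : (l : Fin n) → Matrix (Fin d) (Fin (d' l)) ℂ),
        ∀ i j, ρ i j = ∏ l : Fin n, (C l * (C l)ᴴ) (i l) (j l))) := by
  constructor
  · exact ⟨key_product_psd ρ hρ, fun ⟨A, _, h⟩ => ⟨A, h⟩⟩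
  · constructor
    · intro h
      obtain ⟨A, hApsd, hAeq⟩ := key_product_psd ρ hρ h
      refine ⟨fun _ => d, fun l => (psd_factor2' (hApsd l)).choose, fun i j => ?_⟩
      rw [hAeq i j]
      refine Finset.prod_congr rfl fun l _ => ?_
      have h1 : (psd_factor2' (hApsd l)).choose * ((psd_factor2' (hApsd l)).choose)ᴴ = A l := by
        exact (psd_factor2' (hApsd l)).choose_spec
      rw [h1]
    · rintro ⟨d', C, hC⟩
      exact ⟨fun l => C l * (C l)ᴴ, hC⟩
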